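/- Let (A,[·,·],{·,·,·},α) be a Hom-Bol superalgebra and β an even self-morphism of it (β commutes with α and preserves both operations). For any n ≥ 0, define [x,y]_{β^n} := β^n([x,y]) and {x,y,z}_{β^n} := β^{2n}({x,y,z}). Then (A, [·,·]_{β^n}, {·,·,·}_{β^n}, β^n ∘ α) is a Hom-Bol superalgebra. -/
import Mathlib


def sgn (K : Type*) [Field K] (i j : ZMod 2) : K := (-1 : K) ^ (i * j).val

def IsBilin (K : Type*) {A : Type*} [Field K] [AddCommGroup A] [Module K A]
    (f : A → A → A) : Prop :=
  (∀ (c : K) (x y : A), f (c • x) y = c • f x y) ∧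
  (∀ x x' y : A, f (x + x') y = f x y + f x' y) ∧
  (∀ (c : K) (x y : A), f x (c • y) = c • f x y) ∧
  (∀ x y y' : A, f x (y + y') = f x y + f x y')

def IsTrilin (K : Type*) {A : Type*} [Field K] [AddCommGroup A] [Module K A]
    (f : A → A → A → A) : Prop :=
  (∀ (c : K) (x y z : A), f (c • x) y z = c • f x y z) ∧
  (∀ x x' y z : A, f (x + x') y z = f x y z + f x' y z) ∧
  (∀ (c : K) (x y z : A), f x (c • y) z = c • f x y z) ∧
  (∀ x y y' z : A, f x (y + y') z = f x y z + f x y' z) ∧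
  (∀ (c : K) (x y z : A), f x y (c • z) = c • f x y z) ∧
  (∀ x y z z' : A, f x y (z + z') = f x y z + f x y z')

def asc {A : Type*} [AddCommGroup A] (mul : A → A → A) (x y z : A) : A :=
  mul (mul x y) z - mul x (mul y z)

def hasc {A : Type*} [AddCommGroup A] (mul : A → A → A) (α : A → A) (x y z : A) : A :=
  mul (mul x y) (α z) - mul (α x) (mul y z)

def br (K : Type*) {A : Type*} [Field K] [AddCommGroup A] [Module K A]
    (mul : A → A → A) (i j : ZMod 2) (x y : A) : A :=
  (2 : K)⁻¹ • (mul x y - sgn K i j • mul y x)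

def jp (K : Type*) {A : Type*} [Field K] [AddCommGroup A] [Module K A]
    (mul : A → A → A) (i j : ZMod 2) (x y : A) : A :=
  (2 : K)⁻¹ • (mul x y + sgn K i j • mul y x)

/-- A Hom-Bol superalgebra structure on a graded module. -/
structure IsHomBol (K : Type*) {A : Type*} [Field K] [AddCommGroup A] [Module K A]
    (𝒜 : ZMod 2 → Submodule K A) (brk : A → A → A) (tr : A → A → A → A)
    (α : A → A) : Prop where
  brk_bilin : IsBilin K brk
  tr_trilin : IsTrilin K tr
  alpha_smul : ∀ (c : K) (x : A), α (c • x) = c • α x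
  alpha_add : ∀ x y : A, α (x + y) = α x + α y
  alpha_even : ∀ (i : ZMod 2) (x : A), x ∈ 𝒜 i → α x ∈ 𝒜 i
  brk_grade : ∀ (i j : ZMod 2) (x y : A), x ∈ 𝒜 i → y ∈ 𝒜 j → brk x y ∈ 𝒜 (i + j)
  tr_grade : ∀ (i j k : ZMod 2) (x y z : A),
    x ∈ 𝒜 i → y ∈ 𝒜 j → z ∈ 𝒜 k → tr x y z ∈ 𝒜 (i + j + k)
  brk_mult : ∀ x y : A, α (brk x y) = brk (α x) (α y)
  tr_mult : ∀ x y z : A, α (tr x y z) = tr (α x) (α y) (α z)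
  shb1 : ∀ (i j : ZMod 2) (x y : A), x ∈ 𝒜 i → y ∈ 𝒜 j →
    brk x y = (-(sgn K i j)) • brk y x
  shb2 : ∀ (i j k : ZMod 2) (x y z : A), x ∈ 𝒜 i → y ∈ 𝒜 j → z ∈ 𝒜 k →
    tr x y z = (-(sgn K i j)) • tr y x z
  shb3 : ∀ (i j k : ZMod 2) (x y z : A), x ∈ 𝒜 i → y ∈ 𝒜 j → z ∈ 𝒜 k →
    tr x y z + sgn K i (j + k) • tr y z x + sgn K k (i + j) • tr z x y = 0
  shb4 : ∀ (i j p q : ZMod 2) (x y u v : A),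
    x ∈ 𝒜 i → y ∈ 𝒜 j → u ∈ 𝒜 p → v ∈ 𝒜 q →
    tr (α x) (α y) (brk u v)
      = brk (tr x y u) (α (α v)) + sgn K p (i + j) • brk (α (α u)) (tr x y v)
        + sgn K (i + j) (p + q) •
          (tr (α u) (α v) (brk x y) - brk (brk (α u) (α v)) (brk (α x) (α y)))
  shb5 : ∀ (i j p q r : ZMod 2) (x y u v w : A),
    x ∈ 𝒜 i → y ∈ 𝒜 j → u ∈ 𝒜 p → v ∈ 𝒜 q → w ∈ 𝒜 r →
    tr (α (α x)) (α (α y)) (tr u v w)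
      = tr (tr x y u) (α (α v)) (α (α w))
        + sgn K p (i + j) • tr (α (α u)) (tr x y v) (α (α w))
        + sgn K (i + j) (p + q) • tr (α (α u)) (α (α v)) (tr x y w)

/-- Theorem 5.1: twisting a Hom-Bol superalgebra by powers of an even
self-morphism yields a Hom-Bol superalgebra. -/
theorem stmt7 {K A : Type*} [Field K] [AddCommGroup A] [Module K A]
    (𝒜 : ZMod 2 → Submodule K A) (hds : DirectSum.IsInternal 𝒜)
    (brk : A → A → A) (tr : A → A → A → A) (α : A → A)
    (hB : IsHomBol K 𝒜 brk tr α)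
    (β : A → A)
    (hβsmul : ∀ (c : K) (x : A), β (c • x) = c • β x)
    (hβadd : ∀ x y : A, β (x + y) = β x + β y)
    (hβeven : ∀ (i : ZMod 2) (x : A), x ∈ 𝒜 i → β x ∈ 𝒜 i)
    (hβbrk : ∀ x y : A, β (brk x y) = brk (β x) (β y))
    (hβtr : ∀ x y z : A, β (tr x y z) = tr (β x) (β y) (β z))
    (hβα : ∀ x : A, β (α x) = α (β x))
    (n : ℕ) :
    IsHomBol K 𝒜 (fun x y => β^[n] (brk x y)) (fun x y z => β^[2 * n] (tr x y z))
      (fun x => β^[n] (α x)) := by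

  have Ls : ∀ (m : ℕ) (c : K) (x : A), β^[m] (c • x) = c • β^[m] x := by
    intro m
    induction m with
    | zero => intro c x; simp
    | succ m ih => intro c x; simp [Function.iterate_succ_apply', ih, hβsmul]
  have La : ∀ (m : ℕ) (x y : A), β^[m] (x + y) = β^[m] x + β^[m] y := by
    intro m
    induction m with
    | zero => intro x y; simp
    | succ m ih => intro x y; simp [Function.iterate_succ_apply', ih, hβadd]
  have Le : ∀ (m : ℕ) (i : ZMod 2) (x : A), x ∈ 𝒜 i → β^[m] x ∈ 𝒜 i := by
    intro m
    induction m with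
    | zero => intro i x h; simpa using h
    | succ m ih =>
      intro i x h
      rw [Function.iterate_succ_apply']
      exact hβeven _ _ (ih _ _ h)
  have Lb : ∀ (m : ℕ) (x y : A), brk (β^[m] x) (β^[m] y) = β^[m] (brk x y) := by
    intro m
    induction m with
    | zero => intro x y; simp
    | succ m ih =>
      intro x y
      simp only [Function.iterate_succ_apply', ← hβbrk, ih]
  have Lt : ∀ (m : ℕ) (x y z : A), tr (β^[m] x) (β^[m] y) (β^[m] z) = β^[m] (tr x y z) := by
    intro m
    induction m with
    | zero => intro x y z; simp
    | succ m ih =>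
      intro x y z
      simp only [Function.iterate_succ_apply', ← hβtr, ih]
  have Lα : ∀ (m : ℕ) (x : A), α (β^[m] x) = β^[m] (α x) := by
    intro m
    induction m with
    | zero => intro x; simp
    | succ m ih =>
      intro x
      simp only [Function.iterate_succ_apply', ← hβα, ih]
  have Lc : ∀ (a b : ℕ) (x : A), β^[a] (β^[b] x) = β^[a + b] x := by
    intro a b x
    exact (Function.iterate_add_apply β a b x).symm
  have Lneg : ∀ (m : ℕ) (x : A), β^[m] (-x) = -β^[m] x := by
    intro m x
    rw [← neg_one_smul K x, Ls, neg_one_smul]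
  have Lsub : ∀ (m : ℕ) (x y : A), β^[m] x - β^[m] y = β^[m] (x - y) := by
    intro m x y
    rw [sub_eq_add_neg, sub_eq_add_neg, La, Lneg]
  have L0 : ∀ m : ℕ, β^[m] (0 : A) = 0 := by
    intro m
    simpa using Ls m 0 0
  have Lsi : ∀ (m : ℕ) (c : K) (x : A), c • β^[m] x = β^[m] (c • x) :=
    fun m c x => (Ls m c x).symm
  have Lai : ∀ (m : ℕ) (x y : A), β^[m] x + β^[m] y = β^[m] (x + y) :=
    fun m x y => (La m x y).symm
  obtain ⟨b1, b2, b3, b4⟩ := hB.brk_bilin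
  obtain ⟨t1, t2, t3, t4, t5, t6⟩ := hB.tr_trilin
  constructor
  · exact ⟨fun c x y => by simp [b1, Ls], fun x x' y => by simp [b2, La],
      fun c x y => by simp [b3, Ls], fun x y y' => by simp [b4, La]⟩
  · exact ⟨fun c x y z => by simp [t1, Ls], fun x x' y z => by simp [t2, La],
      fun c x y z => by simp [t3, Ls], fun x y y' z => by simp [t4, La],
      fun c x y z => by simp [t5, Ls], fun x y z z' => by simp [t6, La]⟩
  · intro c x; simp [hB.alpha_smul, Ls]
  · intro x y; simp [hB.alpha_add, La]
  · intro i x hx; exact Le n _ _ (hB.alpha_even i x hx)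
  · intro i j x y hx hy; exact Le n _ _ (hB.brk_grade i j x y hx hy)
  · intro i j k x y z hx hy hz; exact Le _ _ _ (hB.tr_grade i j k x y z hx hy hz)
  · intro x y
    simp only [Lα, Lb, Lc, two_mul, Nat.add_assoc]
    exact congrArg _ (hB.brk_mult x y)
  · intro x y z
    simp only [Lα, Lt, Lc, two_mul, Nat.add_assoc]
    exact congrArg _ (hB.tr_mult x y z)
  · intro i j x y hx hy
    rw [hB.shb1 i j x y hx hy, Ls]
  · intro i j k x y z hx hy hz
    rw [hB.shb2 i j k x y z hx hy hz, Ls]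
  · intro i j k x y z hx hy hz
    simp only [Lsi, Lai]
    rw [hB.shb3 i j k x y z hx hy hz, L0]
  · intro i j p q x y u v hx hy hu hv
    simp only [Lα, Lb, Lt, Lc, Lsi, Lai, Lsub, two_mul, Nat.add_assoc]
    exact congrArg _ (hB.shb4 i j p q x y u v hx hy hu hv)
  · intro i j p q r x y u v w hx hy hu hv hw
    simp only [Lα, Lb, Lt, Lc, Lsi, Lai, Lsub, two_mul, Nat.add_assoc]
    exact congrArg _ (hB.shb5 i j p q r x y u v w hx hy hu hv hw)
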